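/- For φ ∈ [0, π/2], define λ(φ) = (1 + cos²φ + 2 cos φ sin φ)/8 and λ'(φ) = (−sin 2φ + 2 cos 2φ)/8, and set ṡ(φ) = 2λ(φ)·cos φ − λ'(φ)·sin φ and ν̇(φ) = 2λ(φ)·sin φ + λ'(φ)·cos φ. Then for every φ ∈ [0, π/2] one has ṡ(φ)/2 ≤ ν̇(φ) ≤ ṡ(φ), and the identity 4·(ṡ(φ)² − 2·ṡ(φ)·ν̇(φ) + 2·ν̇(φ)²) = (1 + cos²φ + 2 cos φ sin φ)/4 holds. -/
import Mathlib

open Real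

/-- On `φ ∈ [0, π/2]`, with `λ(φ) = (1 + cos²φ + 2cos φ sin φ)/8`,
`λ'(φ) = (−sin 2φ + 2cos 2φ)/8`, `ṡ = 2λcos φ − λ'sin φ`,
`ν̇ = 2λsin φ + λ'cos φ`, one has `ṡ/2 ≤ ν̇ ≤ ṡ` and
`4(ṡ² − 2ṡν̇ + 2ν̇²) = (1 + cos²φ + 2cos φ sin φ)/4`. -/
theorem stmt_10 (φ : ℝ) (hφ : φ ∈ Set.Icc (0:ℝ) (π/2)) :
    (2 * ((1 + (Real.cos φ)^2 + 2 * Real.cos φ * Real.sin φ) / 8) * Real.cos φ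
        - ((-Real.sin (2*φ) + 2 * Real.cos (2*φ)) / 8) * Real.sin φ) / 2
      ≤ 2 * ((1 + (Real.cos φ)^2 + 2 * Real.cos φ * Real.sin φ) / 8) * Real.sin φ
        + ((-Real.sin (2*φ) + 2 * Real.cos (2*φ)) / 8) * Real.cos φ ∧
    2 * ((1 + (Real.cos φ)^2 + 2 * Real.cos φ * Real.sin φ) / 8) * Real.sin φ
        + ((-Real.sin (2*φ) + 2 * Real.cos (2*φ)) / 8) * Real.cos φ
      ≤ 2 * ((1 + (Real.cos φ)^2 + 2 * Real.cos φ * Real.sin φ) / 8) * Real.cos φ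
        - ((-Real.sin (2*φ) + 2 * Real.cos (2*φ)) / 8) * Real.sin φ ∧
    4 * ((2 * ((1 + (Real.cos φ)^2 + 2 * Real.cos φ * Real.sin φ) / 8) * Real.cos φ
          - ((-Real.sin (2*φ) + 2 * Real.cos (2*φ)) / 8) * Real.sin φ)^2
        - 2 * (2 * ((1 + (Real.cos φ)^2 + 2 * Real.cos φ * Real.sin φ) / 8) * Real.cos φ
            - ((-Real.sin (2*φ) + 2 * Real.cos (2*φ)) / 8) * Real.sin φ)
          * (2 * ((1 + (Real.cos φ)^2 + 2 * Real.cos φ * Real.sin φ) / 8) * Real.sin φ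
            + ((-Real.sin (2*φ) + 2 * Real.cos (2*φ)) / 8) * Real.cos φ)
        + 2 * (2 * ((1 + (Real.cos φ)^2 + 2 * Real.cos φ * Real.sin φ) / 8) * Real.sin φ
            + ((-Real.sin (2*φ) + 2 * Real.cos (2*φ)) / 8) * Real.cos φ)^2)
      = (1 + (Real.cos φ)^2 + 2 * Real.cos φ * Real.sin φ) / 4 := by
  obtain ⟨h0, h1⟩ := hφ
  have hs : 0 ≤ Real.sin φ := Real.sin_nonneg_of_nonneg_of_le_pi h0 (by linarith [Real.pi_pos])
  have hc : 0 ≤ Real.cos φ := Real.cos_nonneg_of_mem_Icc ⟨by linarith [Real.pi_pos], h1⟩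
  have hpy := Real.sin_sq_add_cos_sq φ
  rw [Real.sin_two_mul, Real.cos_two_mul]
  have hsd : 2 * ((1 + (Real.cos φ)^2 + 2 * Real.cos φ * Real.sin φ) / 8) * Real.cos φ
      - ((-(2 * Real.sin φ * Real.cos φ) + 2 * (2 * (Real.cos φ)^2 - 1)) / 8) * Real.sin φ
      = (2 * Real.cos φ + Real.sin φ) / 4 := by
    linear_combination (Real.cos φ / 4) * hpy
  have hnd : 2 * ((1 + (Real.cos φ)^2 + 2 * Real.cos φ * Real.sin φ) / 8) * Real.sin φ
      + ((-(2 * Real.sin φ * Real.cos φ) + 2 * (2 * (Real.cos φ)^2 - 1)) / 8) * Real.cos φ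
      = (Real.sin φ + Real.cos φ) / 4 := by
    linear_combination (Real.cos φ / 2) * hpy
  rw [hsd, hnd]
  refine ⟨by linarith, by linarith, by linear_combination hpy / 4⟩
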